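/- Let $\tau \ge 1$ and let $y_1,\dots,y_\tau$ be reals with $|y_i| \le 1/(10\tau)$. Define $f(x) = x + x^2 + \sum_{i=1}^\tau (y_i + y_i^2 + 2|x||y_i|)$. Then the function $g(x) = \exp(-f(x))$ is concave on the interval $[-1/10, 1/10]$. -/

import Mathlib

lemma aux_concave (b C : ℝ) (hb : |b| ≤ 1/5) :
    ConcaveOn ℝ (Set.Icc (-(1 / 10) : ℝ) (1 / 10))
      (fun x => Real.exp (-(x + x ^ 2 + C + b * x))) := by
  apply concaveOn_of_hasDerivWithinAt2_nonpos (f' := fun x => (-(1 + 2*x + b)) * Real.exp (-(x + x ^ 2 + C + b * x)))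
    (f'' := fun x => ((1 + 2*x + b)^2 - 2) * Real.exp (-(x + x ^ 2 + C + b * x)))
    (convex_Icc _ _)
  · exact (Real.continuous_exp.comp (by continuity)).continuousOn
  · intro x hx
    have h1 : HasDerivAt (fun x : ℝ => -(x + x ^ 2 + C + b * x)) (-(1 + 2*x + b)) x := by
      have : HasDerivAt (fun x : ℝ => x + x ^ 2 + C + b * x) (1 + 2*x + b) x := by
        have := ((hasDerivAt_id x).add (hasDerivAt_pow 2 x)).add_const C |>.add
          ((hasDerivAt_id x).const_mul b)
        refine this.congr_deriv ?_
        ring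
      exact this.neg
    exact (h1.exp.congr_deriv (by ring)).hasDerivWithinAt
  · intro x hx
    have h1 : HasDerivAt (fun x : ℝ => -(x + x ^ 2 + C + b * x)) (-(1 + 2*x + b)) x := by
      have : HasDerivAt (fun x : ℝ => x + x ^ 2 + C + b * x) (1 + 2*x + b) x := by
        have := ((hasDerivAt_id x).add (hasDerivAt_pow 2 x)).add_const C |>.add
          ((hasDerivAt_id x).const_mul b)
        refine this.congr_deriv ?_
        ring
      exact this.neg
    have h2 : HasDerivAt (fun x : ℝ => (-(1 + 2*x + b)) * Real.exp (-(x + x ^ 2 + C + b * x)))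
        (((1 + 2*x + b)^2 - 2) * Real.exp (-(x + x ^ 2 + C + b * x))) x := by
      have hlin : HasDerivAt (fun x : ℝ => -(1 + 2*x + b)) (-2) x := by
        have := (((hasDerivAt_id x).const_mul 2).const_add 1).add_const b
        refine this.neg.congr_deriv ?_; ring
      have := hlin.mul h1.exp
      refine this.congr_deriv ?_
      ring
    exact h2.hasDerivWithinAt
  · intro x hx
    rw [interior_Icc] at hx
    have hx1 : |x| ≤ 1/10 := abs_le.mpr ⟨le_of_lt hx.1, le_of_lt hx.2⟩
    have h : (1 + 2*x + b)^2 - 2 ≤ 0 := by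
      have : |1 + 2*x + b| ≤ 7/5 := by
        calc |1 + 2*x + b| ≤ |(1:ℝ)| + |2*x| + |b| := by
              exact (abs_add_le _ _).trans (add_le_add_left (abs_add_le _ _) _)
          _ ≤ 1 + 2*(1/10) + 1/5 := by
              rw [abs_one, abs_mul]
              gcongr; · rw [abs_two]
          _ = 7/5 := by norm_num
      nlinarith [abs_nonneg (1 + 2*x + b), sq_abs (1 + 2*x + b)]
    exact mul_nonpos_of_nonpos_of_nonneg h (Real.exp_pos _).le

theorem stmt1 (τ : ℕ) (hτ : 1 ≤ τ) (y : Fin τ → ℝ)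
    (hy : ∀ i, |y i| ≤ 1 / (10 * (τ : ℝ))) :
    ConcaveOn ℝ (Set.Icc (-(1 / 10) : ℝ) (1 / 10))
      (fun x => Real.exp (-(x + x ^ 2 + ∑ i, (y i + (y i) ^ 2 + 2 * |x| * |y i|)))) := by
  set S : ℝ := ∑ i, |y i| with hS
  set C : ℝ := ∑ i, (y i + (y i) ^ 2) with hC
  have hτ0 : (0:ℝ) < (τ : ℝ) := by exact_mod_cast hτ
  have hS0 : 0 ≤ S := Finset.sum_nonneg fun i _ => abs_nonneg _
  have hS1 : S ≤ 1/10 := by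
    calc S ≤ ∑ _i : Fin τ, 1 / (10 * (τ : ℝ)) := Finset.sum_le_sum fun i _ => hy i
      _ = (τ : ℝ) * (1 / (10 * (τ : ℝ))) := by
          rw [Finset.sum_const, Finset.card_univ, Fintype.card_fin, nsmul_eq_mul]
      _ = 1/10 := by field_simp
  have hsum : ∀ x : ℝ, (∑ i, (y i + (y i) ^ 2 + 2 * |x| * |y i|)) = C + 2 * |x| * S := by
    intro x
    rw [hC, hS, Finset.sum_add_distrib, Finset.mul_sum]
  have key : (fun x : ℝ => Real.exp (-(x + x ^ 2 + ∑ i, (y i + (y i) ^ 2 + 2 * |x| * |y i|))))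
      = (fun x => Real.exp (-(x + x ^ 2 + C + (2*S) * x))) ⊓
        (fun x => Real.exp (-(x + x ^ 2 + C + (-(2*S)) * x))) := by
    funext x
    simp only [Pi.inf_apply, hsum x]
    rw [show Real.exp (-(x + x ^ 2 + C + 2 * S * x)) ⊓ Real.exp (-(x + x ^ 2 + C + -(2 * S) * x)) = Real.exp (min (-(x + x ^ 2 + C + 2 * S * x)) (-(x + x ^ 2 + C + -(2 * S) * x))) from (Real.exp_monotone.map_min).symm]
    · congr 1
      rcases le_or_gt 0 x with h | h
      · rw [abs_of_nonneg h, min_eq_left]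
        · ring
        nlinarith
      · rw [abs_of_neg h, min_eq_right]
        · ring
        nlinarith
  rw [key]
  have h1 : |2*S| ≤ 1/5 := by rw [abs_of_nonneg (by linarith)]; linarith
  have h2 : |(-(2*S))| ≤ 1/5 := by rwa [abs_neg]
  exact (aux_concave (2*S) C h1).inf (aux_concave (-(2*S)) C h2)
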